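/- Superset property for $K=2$: let $\Theta \succ 0$ be partitioned by disjoint $A, B, C$, and let $\tilde\Theta$ be the maximum-determinant completion with respect to $O^c = (A\times C)\cup(C\times A)$. Define $A^* = \{i\in A : \tilde\Theta_{ii} < \Theta_{ii}\}$ and $C^* = \{j \in C : \tilde\Theta_{jj} < \Theta_{jj}\}$. Then every pair $(i,j) \in A\times C$ with $\Theta_{ij} \neq 0$ belongs to $A^* \times C^*$; i.e., $\{(i,j)\in A\times C : \Theta_{ij}\neq 0\} \subseteq A^*\times C^*$. -/

import Mathlib

open Matrix

lemma madgq_aux (p : ℕ) (Θ Θ' : Matrix (Fin p) (Fin p) ℝ)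
    (hΘ : Θ.PosDef) (hΘ' : Θ'.PosDef) (i j : Fin p)
    (hzero : ∀ k l, Θ' i k * ((Θ'⁻¹ - Θ⁻¹) k l) * Θ' l i = 0)
    (hji : Θ' j i = 0) (hΘji : Θ j i ≠ 0) :
    Θ' i i < Θ i i := by
  have hΘu : IsUnit Θ.det := isUnit_iff_ne_zero.mpr hΘ.det_pos.ne'
  have hΘ'u : IsUnit Θ'.det := isUnit_iff_ne_zero.mpr hΘ'.det_pos.ne'
  set D : Matrix (Fin p) (Fin p) ℝ := Θ'⁻¹ - Θ⁻¹ with hD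
  have hΘ'symm : Θ'ᵀ = Θ' := by
    have := hΘ'.1
    simpa [Matrix.IsHermitian] using this
  have hDsymm : Dᵀ = D := by
    have : (Θ'⁻¹ - Θ⁻¹).IsHermitian := hΘ'.1.inv.sub hΘ.1.inv
    simpa [Matrix.IsHermitian, hD] using this
  have h1 : Θ * D * Θ' = Θ - Θ' := by
    rw [hD, Matrix.mul_sub, Matrix.sub_mul,
      Matrix.nonsing_inv_mul_cancel_right _ _ hΘ'u,
      Matrix.mul_nonsing_inv _ hΘu, Matrix.one_mul]
  have h2 : Θ' * D * Θ = Θ - Θ' := by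
    rw [hD, Matrix.mul_sub, Matrix.sub_mul,
      Matrix.nonsing_inv_mul_cancel_right _ _ hΘu,
      Matrix.mul_nonsing_inv _ hΘ'u, Matrix.one_mul]
  have h3 : Θ - Θ' = Θ' * D * Θ' + Θ' * D * (Θ * D * Θ') := by
    calc Θ - Θ' = Θ' * D * Θ := h2.symm
    _ = Θ' * D * (Θ' + (Θ - Θ')) := by rw [add_sub_cancel]
    _ = Θ' * D * Θ' + Θ' * D * (Θ * D * Θ') := by rw [Matrix.mul_add, h1]
  set v : Fin p → ℝ := fun k => (Θ' * D) i k with hv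
  have hNT : ∀ l, (D * Θ') l i = v l := by
    intro l
    have ht : (D * Θ')ᵀ = Θ' * D := by rw [Matrix.transpose_mul, hDsymm, hΘ'symm]
    calc (D * Θ') l i = (D * Θ')ᵀ i l := rfl
    _ = (Θ' * D) i l := by rw [ht]
  have h4 : (Θ' * D * Θ') i i = 0 := by
    rw [Matrix.mul_apply]
    apply Finset.sum_eq_zero
    intro l _
    rw [Matrix.mul_apply, Finset.sum_mul]
    exact Finset.sum_eq_zero fun k _ => hzero k l
  have h5 : (Θ' * D * (Θ * D * Θ')) i i = v ⬝ᵥ Θ *ᵥ v := by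
    have hassoc : Θ' * D * (Θ * D * Θ') = (Θ' * D) * Θ * (D * Θ') := by
      noncomm_ring
    have hrow : ∀ l, (Θ' * D * Θ) i l = ∑ k, v k * Θ k l := fun l => by
      rw [Matrix.mul_apply]
    rw [hassoc, Matrix.mul_apply]
    simp only [hrow, hNT, dotProduct, Matrix.mulVec, Finset.sum_mul,
      Finset.mul_sum]
    rw [Finset.sum_comm]
    exact Finset.sum_congr rfl fun k _ => Finset.sum_congr rfl fun l _ => by ring
  have key : Θ i i - Θ' i i = v ⬝ᵥ Θ *ᵥ v := by
    have hiie := congrFun (congrFun h3 i) i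
    simp only [Matrix.sub_apply, Matrix.add_apply, h4, h5, zero_add] at hiie
    linarith
  by_cases hv0 : v = 0
  · exfalso
    apply hΘji
    have hcol : (Θ * (D * Θ')) j i = 0 := by
      rw [Matrix.mul_apply]
      apply Finset.sum_eq_zero
      intro l _
      rw [hNT l, hv0]
      simp
    rw [← Matrix.mul_assoc, h1, Matrix.sub_apply, hji, sub_zero] at hcol
    exact hcol
  · have hpos := hΘ.dotProduct_mulVec_pos hv0
    simp only [RCLike.re_to_real, star_trivial] at hpos
    linarith


/-- **Superset property for `K = 2`.** With `Θ ≻ 0` partitioned by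
disjoint `A, B, C` and `Θ'` the maximum-determinant completion w.r.t.
`O^c = (A×C) ∪ (C×A)`, every pair `(i,j) ∈ A×C` with `Θ_{ij} ≠ 0` lies in
`A* × C*`, where `A* = {i ∈ A : Θ'_{ii} < Θ_{ii}}`, `C* = {j ∈ C : Θ'_{jj} < Θ_{jj}}`. -/
theorem madgq_superset (p : ℕ) (Θ Θ' : Matrix (Fin p) (Fin p) ℝ)
    (hΘ : Θ.PosDef) (hΘ' : Θ'.PosDef) (A B C : Finset (Fin p))
    (hAB : Disjoint A B) (hAC : Disjoint A C) (hBC : Disjoint B C)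
    (hcover : A ∪ B ∪ C = Finset.univ)
    (hz1 : ∀ i ∈ A, ∀ j ∈ C, Θ' i j = 0)
    (hz2 : ∀ i ∈ C, ∀ j ∈ A, Θ' i j = 0)
    (hagree : ∀ i j : Fin p, ¬((i ∈ A ∧ j ∈ C) ∨ (i ∈ C ∧ j ∈ A)) →
      Θ'⁻¹ i j = Θ⁻¹ i j) :
    ∀ i ∈ A, ∀ j ∈ C, Θ i j ≠ 0 → Θ' i i < Θ i i ∧ Θ' j j < Θ j j := by
  intro i hiA j hjC hne
  have hd : ∀ a b : Fin p, ¬((a ∈ A ∧ b ∈ C) ∨ (a ∈ C ∧ b ∈ A)) →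
      (Θ'⁻¹ - Θ⁻¹) a b = 0 := by
    intro a b hab
    simp [Matrix.sub_apply, hagree a b hab]
  have hΘsym : Θ j i = Θ i j := by
    have := hΘ.1.apply i j
    simpa using this
  have hdisj : ∀ x, x ∈ A → x ∈ C → False := fun x hx hx' =>
    (Finset.disjoint_left.mp hAC hx) hx'
  constructor
  · apply madgq_aux p Θ Θ' hΘ hΘ' i j _ (hz2 j hjC i hiA)
    · rw [hΘsym]; exact hne
    · intro k l
      by_cases hkl : (k ∈ A ∧ l ∈ C) ∨ (k ∈ C ∧ l ∈ A)
      · rcases hkl with ⟨hk, hl⟩ | ⟨hk, hl⟩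
        · rw [hz2 l hl i hiA, mul_zero]
        · rw [hz1 i hiA k hk, zero_mul, zero_mul]
      · rw [hd k l hkl, mul_zero, zero_mul]
  · apply madgq_aux p Θ Θ' hΘ hΘ' j i _ (hz1 i hiA j hjC) hne
    intro k l
    by_cases hkl : (k ∈ A ∧ l ∈ C) ∨ (k ∈ C ∧ l ∈ A)
    · rcases hkl with ⟨hk, hl⟩ | ⟨hk, hl⟩
      · rw [hz2 j hjC k hk, zero_mul, zero_mul]
      · rw [hz1 l hl j hjC, mul_zero]
    · rw [hd k l hkl, mul_zero, zero_mul]
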